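/- Let C be a convex subset of a real topological vector space, let f and g be continuous real-valued functions on C with g convex and nonnegative, 0 in the image of g, and g⁻¹(0) ⊆ f⁻¹(0), and let λ ≥ 0. Then every minimiser v of g over the set {v ∈ C : f(v) ≥ λ} satisfies f(v) = λ. Consequently, if a minimiser of g over {v ∈ C : f(v) ≥ λ} exists, then the set of minimisers of g over {v ∈ C : f(v) ≥ λ} coincides with the set of minimisers of g over {v ∈ C : f(v) = λ}. -/

import Mathlib

noncomputable section

/-- Let `C` be a convex subset of a real topological vector space,
`f, g` continuous real functions on `C` with `g` convex and nonnegative on `C`,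
`0` in the image of `g` on `C`, `g⁻¹(0) ⊆ f⁻¹(0)`, and `λ ≥ 0`. Then every minimiser
`v` of `g` over `{v ∈ C : f v ≥ λ}` satisfies `f v = λ`; consequently, if such a
minimiser exists, the minimisers of `g` over `{v ∈ C : f v ≥ λ}` are exactly the
minimisers of `g` over `{v ∈ C : f v = λ}`. -/
theorem constrained_minimisers_saturate {V : Type*} [AddCommGroup V] [Module ℝ V]
    [TopologicalSpace V] [IsTopologicalAddGroup V] [ContinuousSMul ℝ V]
    (C : Set V) (hC : Convex ℝ C) (f g : V → ℝ)
    (hf : ContinuousOn f C) (hg : ContinuousOn g C)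
    (hgconv : ConvexOn ℝ C g) (hgnn : ∀ v ∈ C, 0 ≤ g v)
    (hg0 : ∃ v ∈ C, g v = 0)
    (hsub : ∀ v ∈ C, g v = 0 → f v = 0)
    (lam : ℝ) (hlam : 0 ≤ lam) :
    (∀ v ∈ C, lam ≤ f v → (∀ w ∈ C, lam ≤ f w → g v ≤ g w) → f v = lam) ∧
    ((∃ v, v ∈ C ∧ lam ≤ f v ∧ ∀ w ∈ C, lam ≤ f w → g v ≤ g w) →
      {v | v ∈ C ∧ lam ≤ f v ∧ ∀ w ∈ C, lam ≤ f w → g v ≤ g w} =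
        {v | v ∈ C ∧ f v = lam ∧ ∀ w ∈ C, f w = lam → g v ≤ g w}) := by
  obtain ⟨v₀, hv₀C, hgv₀⟩ := hg0
  have hfv₀ : f v₀ = 0 := hsub v₀ hv₀C hgv₀
  have key : ∀ v ∈ C, lam ≤ f v → (∀ w ∈ C, lam ≤ f w → g v ≤ g w) → f v = lam := by
    intro v hvC hfv hmin
    by_contra hne
    have hlt : lam < f v := lt_of_le_of_ne hfv (Ne.symm hne)
    have hgv : 0 < g v := by
      rcases (hgnn v hvC).lt_or_eq with h | h
      · exact h
      · exfalso
        have := hsub v hvC h.symm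
        linarith
    set φ : ℝ → V := fun t => (1 - t) • v + t • v₀ with hφ
    have hφmem : ∀ t ∈ Set.Icc (0:ℝ) 1, φ t ∈ C := fun t ht =>
      hC hvC hv₀C (by linarith [ht.2]) ht.1 (by ring)
    have hφcont : Continuous φ := by continuity
    have hcont : ContinuousWithinAt (fun t => f (φ t)) (Set.Icc 0 1) 0 :=
      (hf.comp hφcont.continuousOn hφmem) 0 ⟨le_refl 0, zero_le_one⟩
    have hφ0 : φ 0 = v := by simp [hφ]
    have hev : ∀ᶠ t in nhdsWithin 0 (Set.Icc (0:ℝ) 1), lam < f (φ t) := by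
      have ht := hcont.tendsto
      rw [hφ0] at ht
      exact ht.eventually (eventually_gt_nhds hlt)
    have hev' : ∀ᶠ t in nhdsWithin 0 (Set.Ioc (0:ℝ) 1), lam < f (φ t) :=
      hev.filter_mono (nhdsWithin_mono _ Set.Ioc_subset_Icc_self)
    haveI : (nhdsWithin (0:ℝ) (Set.Ioc 0 1)).NeBot :=
      mem_closure_iff_nhdsWithin_neBot.mp
        (by rw [closure_Ioc (zero_ne_one' ℝ)]; exact ⟨le_refl 0, zero_le_one⟩)
    obtain ⟨t, hft, ht⟩ := (hev'.and eventually_mem_nhdsWithin).exists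
    have hwC : φ t ∈ C := hφmem t ⟨ht.1.le, ht.2⟩
    have hconv : g (φ t) ≤ (1 - t) * g v + t * g v₀ :=
      hgconv.2 hvC hv₀C (by linarith [ht.2]) ht.1.le (by ring)
    have hglt : g (φ t) < g v := by
      rw [hgv₀] at hconv
      nlinarith [ht.1, ht.2]
    exact absurd (hmin (φ t) hwC hft.le) (not_le.mpr hglt)
  refine ⟨key, fun ⟨v', hv'C, hfv', hmin'⟩ => ?_⟩
  have hfv'lam : f v' = lam := key v' hv'C hfv' hmin'
  ext v
  simp only [Set.mem_setOf_eq]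
  constructor
  · rintro ⟨hvC, hfv, hmin⟩
    exact ⟨hvC, key v hvC hfv hmin, fun w hwC hfw => hmin w hwC hfw.ge⟩
  · rintro ⟨hvC, hfv, hmin⟩
    refine ⟨hvC, hfv.ge, fun w hwC hfw => ?_⟩
    exact le_trans (hmin v' hv'C hfv'lam) (hmin' w hwC hfw)
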